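/- Fix real constants k_B > 0, T > 0, T₀ > 0, V₀ > 0, a natural number N ≥ 1, and κ > 0. Define the Kaniadakis PDM ideal gas Helmholtz free energy A_κ(V) = −k_B T · ln( (√(T/T₀) · arcsinh(κ V/V₀)/κ)^N / N! ) for V > 0. Then for every V > 0, the function A_κ has derivative at V equal to −P_κ(V), where P_κ(V) = κ N k_B T / ( V₀ · √(1 + κ²(V/V₀)²) · arcsinh(κ V/V₀) ). -/

import Mathlib

theorem stmt_7 (kB T T₀ V₀ κ : ℝ) (N : ℕ)
    (hkB : 0 < kB) (hT : 0 < T) (hT₀ : 0 < T₀) (hV₀ : 0 < V₀)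
    (hN : 1 ≤ N) (hκ : 0 < κ)
    (A P : ℝ → ℝ)
    (hA : ∀ V, 0 < V → A V =
      -(kB * T) * Real.log ((Real.sqrt (T / T₀) *
        (Real.arsinh (κ * V / V₀) / κ)) ^ N / (Nat.factorial N : ℝ)))
    (hP : ∀ V, 0 < V → P V =
      κ * (N : ℝ) * kB * T /
        (V₀ * Real.sqrt (1 + κ ^ 2 * (V / V₀) ^ 2) * Real.arsinh (κ * V / V₀))) :
    ∀ V, 0 < V → HasDerivAt A (-(P V)) V := by
  intro V hV
  obtain ⟨n, rfl⟩ : ∃ n, N = n + 1 := ⟨N - 1, (Nat.succ_pred_eq_of_pos hN).symm⟩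
  set c := Real.sqrt (T / T₀) with hc
  have hcpos : 0 < c := Real.sqrt_pos.mpr (div_pos hT hT₀)
  set x := κ * V / V₀ with hx
  have hxpos : 0 < x := div_pos (mul_pos hκ hV) hV₀
  set s := Real.sqrt (1 + x ^ 2) with hs
  have hspos : 0 < s := Real.sqrt_pos.mpr (by positivity)
  have harpos : 0 < Real.arsinh x := Real.arsinh_pos_iff.mpr hxpos
  set ar := Real.arsinh x with har
  have hhpos : 0 < c * (ar / κ) := mul_pos hcpos (div_pos harpos hκ)
  have hfact : (0:ℝ) < (Nat.factorial (n+1) : ℝ) := by positivity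
  -- derivative of inner argument
  have h1 : HasDerivAt (fun V : ℝ => κ * V / V₀) (κ / V₀) V := by
    simpa using ((hasDerivAt_id V).const_mul κ).div_const V₀
  have hg : HasDerivAt (fun V => Real.arsinh (κ * V / V₀)) (s⁻¹ * (κ / V₀)) V :=
    by have := (Real.hasDerivAt_arsinh x).comp V h1; exact this
  have hh : HasDerivAt (fun V => c * (Real.arsinh (κ * V / V₀) / κ))
      (c * (s⁻¹ * (κ / V₀) / κ)) V := ((hg.div_const κ).const_mul c)
  have hu : HasDerivAt (fun V => (c * (Real.arsinh (κ * V / V₀) / κ)) ^ (n+1) /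
      (Nat.factorial (n+1) : ℝ))
      (((n+1 : ℕ) : ℝ) * (c * (ar / κ)) ^ n * (c * (s⁻¹ * (κ / V₀) / κ)) /
        (Nat.factorial (n+1) : ℝ)) V := by
    simpa using (hh.pow (n+1)).div_const (Nat.factorial (n+1) : ℝ)
  have hune : (c * (ar / κ)) ^ (n+1) / (Nat.factorial (n+1) : ℝ) ≠ 0 := by
    positivity
  have hlog := hu.log hune
  have hf := hlog.const_mul (-(kB * T))
  have hAf : A =ᶠ[nhds V] (fun V => -(kB * T) * Real.log ((c *
      (Real.arsinh (κ * V / V₀) / κ)) ^ (n+1) / (Nat.factorial (n+1) : ℝ))) := by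
    filter_upwards [eventually_gt_nhds hV] with W hW
    exact hA W hW
  have key : HasDerivAt A (-(kB * T) *
      ((((n+1 : ℕ) : ℝ) * (c * (ar / κ)) ^ n * (c * (s⁻¹ * (κ / V₀) / κ)) /
        (Nat.factorial (n+1) : ℝ)) /
       ((c * (ar / κ)) ^ (n+1) / (Nat.factorial (n+1) : ℝ)))) V :=
    hAf.symm.hasDerivAt_iff.mp hf
  have hsq : Real.sqrt (1 + κ ^ 2 * (V / V₀) ^ 2) = s := by
    rw [hs, hx]; ring_nf
  convert key using 1
  rw [hP V hV, hsq, ← har]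
  have hκ' : κ ≠ 0 := ne_of_gt hκ
  have hs' : s ≠ 0 := ne_of_gt hspos
  have har' : ar ≠ 0 := ne_of_gt harpos
  have hc' : c ≠ 0 := ne_of_gt hcpos
  have hV₀' : V₀ ≠ 0 := ne_of_gt hV₀
  have hfact' : (Nat.factorial (n+1) : ℝ) ≠ 0 := ne_of_gt hfact
  rw [pow_succ]
  field_simp
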